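/- Let n ≥ 2 and let G be a tree (a connected acyclic simple graph) on Fin n, with distance matrix D given by D i j = dist_G(i, j). Then D is invertible and the sum of all entries of its inverse satisfies 1ᵀ·D⁻¹·1 = 2/(n − 1); in particular 1ᵀ·D⁻¹·1 > 0. -/

import Mathlib

open Matrix Finset BigOperators

section TreeDistanceAux

open SimpleGraph
set_option linter.unusedSectionVars false

variable {V : Type*} [Fintype V] [DecidableEq V] {G : SimpleGraph V}

/-- across an edge, distances to a fixed vertex differ by exactly one. -/
lemma tdmi_step (hT : G.IsTree) {i k : V} (j : V) (h : G.Adj i k) :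
    G.dist j k = G.dist j i + 1 ∨ G.dist j i = G.dist j k + 1 := by
  have key : ∀ a b : V, G.Adj a b → G.dist j a ≤ G.dist j b →
      G.dist j b = G.dist j a + 1 := by
    intro a b hab hle
    have hconn := hT.isConnected
    have h1 : G.dist a b = 1 := dist_eq_one_iff_adj.2 hab
    have htri : G.dist j b ≤ G.dist j a + 1 := by
      have := hconn.dist_triangle (u := j) (v := a) (w := b)
      omega
    rcases Nat.lt_or_ge (G.dist j b) (G.dist j a + 1) with hlt | hge
    · exfalso
      -- then dist j b = dist j a ; derive contradiction
      have heq : G.dist j b = G.dist j a := by omega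
      obtain ⟨p, hp, hlen⟩ := hconn.exists_path_of_dist j b
      by_cases hi : a ∈ p.support
      · have hq := dist_le (p.takeUntil a hi)
        have hr := dist_le (p.dropUntil a hi)
        have hsplit := congrArg SimpleGraph.Walk.length (p.take_spec hi)
        rw [SimpleGraph.Walk.length_append] at hsplit
        have h2 : G.dist a b = 1 := h1
        have h3 : G.dist b a = 1 := by rwa [dist_comm] at h2
        omega
      · set w := p.concat hab.symm with hw
        have hwp : w.IsPath := by
          rw [SimpleGraph.Walk.isPath_def] at hp ⊢
          rw [hw, SimpleGraph.Walk.support_concat]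
          simp [List.concat_eq_append, List.nodup_append, hp, hi]
          rintro x hx rfl; exact hi hx
        obtain ⟨q, hq, hqlen⟩ := hconn.exists_path_of_dist j a
        have := (hT.existsUnique_path j a).unique hwp hq
        have hlw : w.length = p.length + 1 := SimpleGraph.Walk.length_concat _ _
        have := congrArg SimpleGraph.Walk.length this
        omega
    · omega
  rcases Nat.le_total (G.dist j i) (G.dist j k) with hle | hle
  · exact Or.inl (key i k h hle)
  · exact Or.inr (key k i h.symm hle)

lemma tdmi_exists_closer (hconn : G.Connected) {i j : V} (hij : i ≠ j) :
    ∃ k, G.Adj i k ∧ G.dist i j = G.dist k j + 1 := by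
  obtain ⟨p, hlen⟩ := hconn.exists_walk_length_eq_dist i j
  have hd0 : G.dist i j ≠ 0 := by
    rw [dist_ne_zero_iff_ne_and_reachable]
    exact ⟨hij, hconn.preconnected i j⟩
  cases p with
  | nil => simp at hlen; exact absurd rfl hij
  | cons h q =>
    rename_i k
    refine ⟨k, h, ?_⟩
    rw [SimpleGraph.Walk.length_cons] at hlen
    have h1 : G.dist k j ≤ q.length := dist_le q
    have h2 : G.dist i j ≤ G.dist i k + G.dist k j := hconn.dist_triangle
    have h3 : G.dist i k = 1 := dist_eq_one_iff_adj.2 h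
    omega

lemma tdmi_closer_unique (hT : G.IsTree) {i j k₁ k₂ : V} (h1 : G.Adj i k₁) (h2 : G.Adj i k₂)
    (hd1 : G.dist i j = G.dist k₁ j + 1) (hd2 : G.dist i j = G.dist k₂ j + 1) : k₁ = k₂ := by
  have hconn := hT.isConnected
  obtain ⟨p₁, hp₁, hl₁⟩ := hconn.exists_path_of_dist k₁ j
  obtain ⟨p₂, hp₂, hl₂⟩ := hconn.exists_path_of_dist k₂ j
  have hw₁ : (SimpleGraph.Walk.cons h1 p₁).IsPath := by
    apply SimpleGraph.Walk.isPath_of_length_eq_dist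
    rw [SimpleGraph.Walk.length_cons]; omega
  have hw₂ : (SimpleGraph.Walk.cons h2 p₂).IsPath := by
    apply SimpleGraph.Walk.isPath_of_length_eq_dist
    rw [SimpleGraph.Walk.length_cons]; omega
  have := (hT.existsUnique_path i j).unique hw₁ hw₂
  injection this

lemma tdmi_rowsum [DecidableRel G.Adj] (hT : G.IsTree) {i j : V} (hij : i ≠ j) :
    ∑ k ∈ G.neighborFinset i, (G.dist k j : ℝ) =
      (G.degree i : ℝ) * (G.dist i j) + (G.degree i) - 2 := by
  obtain ⟨k₀, hadj, hd⟩ := tdmi_exists_closer hT.isConnected hij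
  have hk₀ : k₀ ∈ G.neighborFinset i := by rwa [SimpleGraph.mem_neighborFinset]
  rw [← Finset.add_sum_erase _ _ hk₀]
  have hrest : ∀ k ∈ (G.neighborFinset i).erase k₀,
      (G.dist k j : ℝ) = (G.dist i j : ℝ) + 1 := by
    intro k hk
    obtain ⟨hne, hkN⟩ := Finset.mem_erase.1 hk
    rw [SimpleGraph.mem_neighborFinset] at hkN
    have hc : ∀ a b : V, G.dist a b = G.dist b a := fun a b => SimpleGraph.dist_comm
    rcases tdmi_step hT j hkN with hcase | hcase
    · rw [hc k j, hcase, hc j i]; push_cast; ring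
    · exfalso
      rw [hc j i, hc j k] at hcase
      exact hne (tdmi_closer_unique hT hkN hadj hcase hd)
  rw [Finset.sum_congr rfl hrest, Finset.sum_const, Finset.card_erase_of_mem hk₀]
  have hdeg : G.degree i = (G.neighborFinset i).card := (G.card_neighborFinset_eq_degree i).symm
  have hdegpos : 1 ≤ G.degree i := by
    rw [hdeg]; exact Finset.card_pos.2 ⟨k₀, hk₀⟩
  have h1 : (G.dist k₀ j : ℝ) = (G.dist i j : ℝ) - 1 := by
    rw [hd]; push_cast; ring
  rw [h1, ← hdeg]
  have h2 : ((G.degree i - 1 : ℕ) : ℝ) = (G.degree i : ℝ) - 1 := by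
    push_cast [hdegpos]; ring
  rw [nsmul_eq_mul, h2]
  ring

lemma tdmi_colsum [DecidableRel G.Adj] (hT : G.IsTree) (i : V) :
    ∑ j, (G.dist i j : ℝ) * (2 - (G.degree j : ℝ)) = (Fintype.card V : ℝ) - 1 := by
  classical
  have hconn := hT.isConnected
  have hc : ∀ a b : V, G.dist a b = G.dist b a := fun a b => SimpleGraph.dist_comm
  set S : Finset (V × V) :=
    Finset.univ.filter (fun p : V × V => G.Adj p.1 p.2 ∧ G.dist i p.1 < G.dist i p.2) with hS
  have hmemS : ∀ p : V × V, p ∈ S ↔ G.Adj p.1 p.2 ∧ G.dist i p.1 < G.dist i p.2 := by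
    intro p; simp [hS]
  -- On S, distances differ by exactly one
  have hSstep : ∀ p ∈ S, G.dist i p.2 = G.dist i p.1 + 1 := by
    intro p hp
    obtain ⟨hadj, hlt⟩ := (hmemS p).1 hp
    rcases tdmi_step hT i hadj with h | h
    · exact h
    · omega
  -- parent function
  have hpar : ∀ k : V, k ≠ i → ∃ u, G.Adj k u ∧ G.dist k i = G.dist u i + 1 :=
    fun k hk => tdmi_exists_closer hconn hk
  -- bijection between S and univ.erase i
  have hbij : ∀ f : ℕ → ℝ, ∑ p ∈ S, f (G.dist i p.1) = ∑ k ∈ Finset.univ.erase i, f (G.dist i k - 1) := by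
    intro f
    apply Finset.sum_nbij' (i := fun p => p.2)
      (j := fun k => (if h : k = i then i else (hpar k h).choose, k))
    · intro p hp
      obtain ⟨hadj, hlt⟩ := (hmemS p).1 hp
      refine Finset.mem_erase.2 ⟨?_, Finset.mem_univ _⟩
      intro h; rw [h] at hlt; simp [SimpleGraph.dist_self] at hlt
    · intro k hk
      have hki : k ≠ i := (Finset.mem_erase.1 hk).1
      rw [dif_neg hki]
      obtain ⟨hadj, hd⟩ := (hpar k hki).choose_spec
      rw [hmemS]
      dsimp only
      constructor
      · exact hadj.symm
      · rw [hc i ((hpar k hki).choose), hc i k]; omega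
    · -- left inverse : reconstructing p from p.2
      intro p hp
      obtain ⟨hadj, hlt⟩ := (hmemS p).1 hp
      have hp2i : p.2 ≠ i := by
        intro h; rw [h] at hlt; simp [SimpleGraph.dist_self] at hlt
      rw [dif_neg hp2i]
      obtain ⟨hadj', hd'⟩ := (hpar p.2 hp2i).choose_spec
      have hstep := hSstep p hp
      have h1 : G.dist p.2 i = G.dist p.1 i + 1 := by rw [hc p.2 i, hc p.1 i]; omega
      have := tdmi_closer_unique hT hadj' hadj.symm hd' h1
      ext
      · simp [this.symm]
      · rfl
    · intro k hk; rfl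
    · intro p hp
      have hstep := hSstep p hp
      congr 1
      omega
  -- identify the degree-weighted sum
  have hE : ∑ j, (G.degree j : ℝ) * (G.dist i j : ℝ)
      = ∑ p ∈ Finset.univ.filter (fun p : V × V => G.Adj p.1 p.2), (G.dist i p.1 : ℝ) := by
    rw [Finset.sum_filter, Fintype.sum_prod_type]
    apply Finset.sum_congr rfl
    intro j _
    rw [← SimpleGraph.card_neighborFinset_eq_degree]
    have hy : ∀ y, (if G.Adj (j, y).1 (j, y).2 then (G.dist i (j, y).1 : ℝ) else 0)
        = if y ∈ G.neighborFinset j then (G.dist i j : ℝ) else 0 := by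
      intro y; simp [SimpleGraph.mem_neighborFinset]
    rw [Finset.sum_congr rfl (fun y _ => hy y), Finset.sum_ite_mem, Finset.univ_inter,
      Finset.sum_const, nsmul_eq_mul]
  set E := Finset.univ.filter (fun p : V × V => G.Adj p.1 p.2) with hEdef
  have hsplit : ∑ p ∈ E, (G.dist i p.1 : ℝ)
      = ∑ p ∈ S, (G.dist i p.1 : ℝ)
        + ∑ p ∈ E.filter (fun p => ¬ G.dist i p.1 < G.dist i p.2), (G.dist i p.1 : ℝ) := by
    rw [← Finset.sum_filter_add_sum_filter_not E (fun p => G.dist i p.1 < G.dist i p.2)]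
    congr 2
    rw [hEdef, Finset.filter_filter, hS]
  have hswap : ∑ p ∈ E.filter (fun p => ¬ G.dist i p.1 < G.dist i p.2), (G.dist i p.1 : ℝ)
      = ∑ p ∈ S, (G.dist i p.2 : ℝ) := by
    apply Finset.sum_nbij' (i := Prod.swap) (j := Prod.swap)
    · intro p hp
      simp only [hEdef, Finset.mem_filter, Finset.mem_univ, true_and] at hp
      obtain ⟨hadj, hnlt⟩ := hp
      rw [hmemS]
      refine ⟨hadj.symm, ?_⟩
      rcases tdmi_step hT i hadj with h | h <;> simp [Prod.swap] <;> omega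
    · intro p hp
      obtain ⟨hadj, hlt⟩ := (hmemS p).1 hp
      simp only [hEdef, Finset.mem_filter, Finset.mem_univ, true_and]
      exact ⟨hadj.symm, by simp; omega⟩
    · intro p _; simp
    · intro p _; simp
    · intro p _; rfl
  have hS2 : ∑ p ∈ S, (G.dist i p.2 : ℝ) = ∑ p ∈ S, ((G.dist i p.1 : ℝ) + 1) := by
    apply Finset.sum_congr rfl
    intro p hp
    rw [hSstep p hp]
    push_cast; ring
  -- the distance sum
  have hT0 : ∑ k ∈ Finset.univ.erase i, (G.dist i k : ℝ) = ∑ j, (G.dist i j : ℝ) := by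
    apply Finset.sum_erase
    simp [SimpleGraph.dist_self]
  have hcard : (Finset.univ.erase i).card = Fintype.card V - 1 := by
    rw [Finset.card_erase_of_mem (Finset.mem_univ i), Finset.card_univ]
  have hcard1 : 1 ≤ Fintype.card V := Fintype.card_pos_iff.2 ⟨i⟩
  have hdistpos : ∀ k ∈ Finset.univ.erase i, 1 ≤ G.dist i k := by
    intro k hk
    have hki : k ≠ i := (Finset.mem_erase.1 hk).1
    have h0 : G.dist i k ≠ 0 := by
      rw [SimpleGraph.dist_ne_zero_iff_ne_and_reachable]
      exact ⟨hki.symm, hconn.preconnected i k⟩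
    omega
  -- main count : ∑_S (2 d(i,p.1) + 1) = ∑_{k ≠ i} (2 d(i,k) - 1)
  have hmain : ∑ p ∈ S, (2 * (G.dist i p.1 : ℝ) + 1)
      = 2 * (∑ j, (G.dist i j : ℝ)) - ((Fintype.card V : ℝ) - 1) := by
    have := hbij (fun d => 2 * (d : ℝ) + 1)
    rw [this]
    have hcong : ∀ k ∈ Finset.univ.erase i,
        (2 * ((G.dist i k - 1 : ℕ) : ℝ) + 1) = 2 * (G.dist i k : ℝ) - 1 := by
      intro k hk
      have h1 := hdistpos k hk
      have : ((G.dist i k - 1 : ℕ) : ℝ) = (G.dist i k : ℝ) - 1 := by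
        push_cast [h1]; ring
      rw [this]; ring
    rw [Finset.sum_congr rfl hcong, Finset.sum_sub_distrib, ← Finset.mul_sum, hT0,
      Finset.sum_const, hcard, nsmul_eq_mul, mul_one]
    have : ((Fintype.card V - 1 : ℕ) : ℝ) = (Fintype.card V : ℝ) - 1 := by
      push_cast [hcard1]; ring
    rw [this]
  have hdegsum : ∑ j, (G.degree j : ℝ) * (G.dist i j : ℝ)
      = 2 * (∑ j, (G.dist i j : ℝ)) - ((Fintype.card V : ℝ) - 1) := by
    rw [hE, hsplit, hswap, hS2, ← hmain]
    rw [← Finset.sum_add_distrib]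
    apply Finset.sum_congr rfl
    intro p _; ring
  calc ∑ j, (G.dist i j : ℝ) * (2 - (G.degree j : ℝ))
      = 2 * (∑ j, (G.dist i j : ℝ)) - ∑ j, (G.degree j : ℝ) * (G.dist i j : ℝ) := by
        rw [Finset.mul_sum, ← Finset.sum_sub_distrib]
        apply Finset.sum_congr rfl
        intro j _; ring
    _ = (Fintype.card V : ℝ) - 1 := by rw [hdegsum]; ring

end TreeDistanceAux

/-- The distance matrix `D` of a tree on `n ≥ 2` vertices is invertible and the sum of
all entries of `D⁻¹` equals `2/(n − 1)`; in particular it is positive. -/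
theorem tree_distance_matrix_inverse_sum {n : ℕ} (hn : 2 ≤ n)
    (G : SimpleGraph (Fin n)) (hT : G.IsTree)
    (D : Matrix (Fin n) (Fin n) ℝ) (hD : ∀ i j, D i j = (G.dist i j : ℝ)) :
    IsUnit D ∧ (∑ i, ∑ j, D⁻¹ i j = 2 / ((n : ℝ) - 1)) ∧ 0 < ∑ i, ∑ j, D⁻¹ i j := by
  classical
  haveI : DecidableRel G.Adj := Classical.decRel _
  have hconn := hT.isConnected
  have hc : ∀ a b : Fin n, G.dist a b = G.dist b a := fun a b => SimpleGraph.dist_comm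
  have hn2 : (2 : ℝ) ≤ (n : ℝ) := by exact_mod_cast hn
  have hn1 : (n : ℝ) - 1 ≠ 0 := by linarith
  set τ : Fin n → ℝ := fun v => 2 - (G.degree v : ℝ) with hτ
  set c : ℝ := 1 / (2 * ((n : ℝ) - 1)) with hcdef
  set M : Matrix (Fin n) (Fin n) ℝ := Matrix.of (fun i k =>
    -(1/2) * ((if k = i then (G.degree i : ℝ) else 0) - (if G.Adj i k then 1 else 0))
      + c * τ i * τ k) with hM
  -- basic sums
  have hS1 : ∀ i j : Fin n, ∑ k, (if k = i then (G.degree i : ℝ) else 0) * (G.dist k j : ℝ)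
      = (G.degree i : ℝ) * (G.dist i j : ℝ) := by
    intro i j
    rw [Finset.sum_eq_single i]
    · simp
    · intro b _ hb; simp [hb]
    · simp
  have hS2 : ∀ i j : Fin n, ∑ k, (if G.Adj i k then (G.dist k j : ℝ) else 0)
      = ∑ k ∈ G.neighborFinset i, (G.dist k j : ℝ) := by
    intro i j
    rw [← Finset.sum_filter, ← SimpleGraph.neighborFinset_eq_filter]
  have hS3 : ∀ j : Fin n, ∑ k, τ k * (G.dist k j : ℝ) = (n : ℝ) - 1 := by
    intro j
    have := tdmi_colsum hT j
    rw [Fintype.card_fin] at this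
    rw [← this]
    apply Finset.sum_congr rfl
    intro k _
    rw [hc k j]; simp [hτ]; ring
  have hdegself : ∀ i : Fin n, ∑ k ∈ G.neighborFinset i, (G.dist k i : ℝ) = (G.degree i : ℝ) := by
    intro i
    have : ∀ k ∈ G.neighborFinset i, (G.dist k i : ℝ) = 1 := by
      intro k hk
      rw [SimpleGraph.mem_neighborFinset] at hk
      rw [SimpleGraph.dist_eq_one_iff_adj.2 hk.symm]
      norm_num
    rw [Finset.sum_congr rfl this, Finset.sum_const, nsmul_eq_mul, mul_one,
      SimpleGraph.card_neighborFinset_eq_degree]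
  -- M is a left inverse of D
  have hMD : M * D = 1 := by
    ext i j
    rw [Matrix.mul_apply, Matrix.one_apply]
    have expand : ∀ k, M i k * D k j
        = -(1/2) * ((if k = i then (G.degree i : ℝ) else 0) * (G.dist k j : ℝ)
            - (if G.Adj i k then (G.dist k j : ℝ) else 0))
          + c * τ i * (τ k * (G.dist k j : ℝ)) := by
      intro k
      rw [hD]
      simp only [hM, Matrix.of_apply]
      by_cases h1 : k = i <;> by_cases h2 : G.Adj i k <;> simp [h1, h2] <;> ring
    rw [Finset.sum_congr rfl (fun k _ => expand k), Finset.sum_add_distrib,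
      ← Finset.mul_sum, ← Finset.mul_sum, Finset.sum_sub_distrib, hS1, hS2, hS3]
    by_cases hij : i = j
    · subst hij
      rw [hdegself i]
      simp only [if_pos rfl, SimpleGraph.dist_self, Nat.cast_zero, mul_zero]
      rw [hcdef, hτ]
      field_simp
      ring_nf
      simp
    · rw [tdmi_rowsum hT hij, if_neg hij, hcdef, hτ]
      field_simp
      ring
  have hUnit : IsUnit D := (Matrix.isUnit_iff_isUnit_det D).2 (Matrix.isUnit_det_of_left_inverse hMD)
  have hInv : D⁻¹ = M := Matrix.inv_eq_left_inv hMD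
  -- sum of entries of M
  have hdegsum : ∑ v : Fin n, (G.degree v : ℝ) = 2 * ((n : ℝ) - 1) := by
    have h1 := G.sum_degrees_eq_twice_card_edges
    have h2 := hT.card_edgeFinset
    rw [Fintype.card_fin] at h2
    have h3 : (∑ v : Fin n, (G.degree v : ℝ)) = ((∑ v : Fin n, G.degree v : ℕ) : ℝ) := by
      push_cast; rfl
    have h4 : ((#G.edgeFinset : ℕ) : ℝ) = (n : ℝ) - 1 := by
      have : ((#G.edgeFinset : ℕ) : ℝ) + 1 = (n : ℝ) := by exact_mod_cast congrArg Nat.cast h2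
      linarith
    rw [h3, h1]
    push_cast
    rw [h4]
  have hτtot : ∑ v : Fin n, τ v = 2 := by
    rw [hτ]
    rw [Finset.sum_sub_distrib, Finset.sum_const, hdegsum, Finset.card_univ, Fintype.card_fin,
      nsmul_eq_mul]
    ring
  have hrowM : ∀ i : Fin n, ∑ j, M i j = c * τ i * 2 := by
    intro i
    have expand : ∀ j, M i j
        = -(1/2) * ((if j = i then (G.degree i : ℝ) else 0) - (if G.Adj i j then 1 else 0))
          + c * τ i * τ j := fun j => rfl
    rw [Finset.sum_congr rfl (fun j _ => expand j), Finset.sum_add_distrib,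
      ← Finset.mul_sum, ← Finset.mul_sum, Finset.sum_sub_distrib]
    have e1 : ∑ j : Fin n, (if j = i then (G.degree i : ℝ) else 0) = (G.degree i : ℝ) := by
      rw [Finset.sum_eq_single i]
      · simp
      · intro b _ hb; simp [hb]
      · simp
    have e2 : ∑ j : Fin n, (if G.Adj i j then (1:ℝ) else 0) = (G.degree i : ℝ) := by
      rw [← Finset.sum_filter, ← SimpleGraph.neighborFinset_eq_filter, Finset.sum_const,
        nsmul_eq_mul, mul_one, SimpleGraph.card_neighborFinset_eq_degree]
    rw [e1, e2, hτtot]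
    ring
  have hsumM : ∑ i, ∑ j, M i j = 2 / ((n : ℝ) - 1) := by
    rw [Finset.sum_congr rfl (fun i _ => hrowM i)]
    have : ∑ i : Fin n, c * τ i * 2 = c * 2 * ∑ i, τ i := by
      rw [Finset.mul_sum]
      apply Finset.sum_congr rfl
      intro i _; ring
    rw [this, hτtot, hcdef]
    field_simp
  refine ⟨hUnit, ?_, ?_⟩
  · rw [hInv, hsumM]
  · rw [hInv, hsumM]
    apply div_pos
    · norm_num
    · linarith
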